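/- Let I ⊆ [n] be nonempty and let I_1,…,I_k be the strongly connected components of I (i.e., of the induced subgraph of Γ on I). Then Y_I = ∏_{j=1}^k Y_{I_j}. -/

import Mathlib

open MvPolynomial

/-- Reachability inside a subset `U` of vertices, along edges of `E`. -/
def ReachIn {n : ℕ} (E : Fin n → Fin n → Prop) (U : Finset (Fin n)) (a b : Fin n) : Prop :=
  Relation.ReflTransGen (fun x y => E x y ∧ x ∈ U ∧ y ∈ U) a b

/-- A nonempty subset `I` is strongly connected if any vertex of `I` can reach any
other vertex of `I` by a directed path staying inside `I`. -/
def StronglyConnected {n : ℕ} (E : Fin n → Fin n → Prop) (I : Finset (Fin n)) : Prop :=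
  I.Nonempty ∧ ∀ a ∈ I, ∀ b ∈ I, ReachIn E I a b

open Classical in
/-- The strongly connected component of `x` in the induced subgraph on `U`. -/
noncomputable def scc {n : ℕ} (E : Fin n → Fin n → Prop) (U : Finset (Fin n)) (x : Fin n) :
    Finset (Fin n) :=
  U.filter fun y => ReachIn E U x y ∧ ReachIn E U y x

/-- `S ⊕ j` : the strongly connected component of `S ∪ {j}` containing `j`. -/
noncomputable def oplus {n : ℕ} (E : Fin n → Fin n → Prop) (S : Finset (Fin n)) (j : Fin n) :
    Finset (Fin n) :=
  scc E (insert j S) j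

/-- `S ⊖ j = (S ∪ {j}) − (S ⊕ j)`. -/
noncomputable def ominus {n : ℕ} (E : Fin n → Fin n → Prop) (S : Finset (Fin n)) (j : Fin n) :
    Finset (Fin n) :=
  insert j S \ oplus E S j

/-- A family of strongly connected subsets is nested if any two members are nested or
disjoint, and any tuple of pairwise disjoint members are exactly the strongly connected
components of their union. -/
def Nested {n : ℕ} (E : Fin n → Fin n → Prop) (𝒮 : Finset (Finset (Fin n))) : Prop :=
  (∀ I ∈ 𝒮, StronglyConnected E I) ∧
  (∀ I ∈ 𝒮, ∀ J ∈ 𝒮, I ⊆ J ∨ J ⊆ I ∨ Disjoint I J) ∧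
  (∀ 𝒯 ⊆ 𝒮, (∀ I ∈ 𝒯, ∀ J ∈ 𝒯, I ≠ J → Disjoint I J) →
    ∀ I ∈ 𝒯, ∀ x ∈ I, scc E (𝒯.sup id) x = I)

/-- The support of a collection: the union of its members. -/
def nsupport {n : ℕ} (𝒮 : Finset (Finset (Fin n))) : Finset (Fin n) := 𝒮.sup id

/-- A nested collection is maximal (for its support) if the only nested collection with the
same support containing it is itself. -/
def MaximalNested {n : ℕ} (E : Fin n → Fin n → Prop) (𝒮 : Finset (Finset (Fin n))) : Prop :=
  Nested E 𝒮 ∧ ∀ 𝒮' : Finset (Finset (Fin n)),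
    Nested E 𝒮' → nsupport 𝒮' = nsupport 𝒮 → 𝒮 ⊆ 𝒮' → 𝒮' = 𝒮

/-- The ambient field: rational functions in the indeterminates `A_1,…,A_n,X_1,…,X_n`. -/
abbrev Kn (n : ℕ) : Type := FractionRing (MvPolynomial (Fin n ⊕ Fin n) ℤ)

/-- The coefficient `A_i`, as an element of the ambient field. -/
noncomputable def AA {n : ℕ} (i : Fin n) : Kn n :=
  algebraMap (MvPolynomial (Fin n ⊕ Fin n) ℤ) (Kn n) (X (Sum.inl i))

/-- The initial cluster variable `X_i`, as an element of the ambient field. -/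
noncomputable def XX {n : ℕ} (i : Fin n) : Kn n :=
  algebraMap (MvPolynomial (Fin n ⊕ Fin n) ℤ) (Kn n) (X (Sum.inr i))

/-- `f` is acyclic on `I`: the only directed cycles in the graph `{i → f(i) : i ∈ I}`
are loops at fixed points. -/
def IsAcyclicOn {n : ℕ} (I : Finset (Fin n)) (f : Fin n → Fin n) : Prop :=
  ∀ i ∈ I, ∀ k : ℕ, 0 < k → (∀ r < k, f^[r] i ∈ I) → f^[k] i = i → f i = i

open Classical in
/-- The numerator `N_I` of `Y_I`: the generating function of acyclic functions `f : I → [n]`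
(encoded as functions `Fin n → Fin n` fixing every vertex outside `I`), where a fixed point
`i ∈ I` contributes `A_i` and a non-fixed point contributes `X_{f i}`. -/
noncomputable def Ynum {n : ℕ} (E : Fin n → Fin n → Prop) (I : Finset (Fin n)) :
    MvPolynomial (Fin n ⊕ Fin n) ℤ :=
  ∑ f : Fin n → Fin n,
    if (∀ i, i ∉ I → f i = i) ∧ (∀ i ∈ I, f i = i ∨ E i (f i)) ∧ IsAcyclicOn I f then
      ∏ i ∈ I, if f i = i then X (Sum.inl i) else X (Sum.inr (f i))
    else 0

/-- The Laurent polynomial `Y_I` (with `Y_∅ = 1`). -/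
noncomputable def YY {n : ℕ} (E : Fin n → Fin n → Prop) (I : Finset (Fin n)) : Kn n :=
  algebraMap (MvPolynomial (Fin n ⊕ Fin n) ℤ) (Kn n) (Ynum E I) / ∏ i ∈ I, XX i

open Classical in
/-- `P_S^{i,j}`: the sum of `Y_{S − p}` over all simple paths `p : i →_S j` in the graph,
whose intermediate vertices lie in `S`.  A path with `m` edges is encoded as an injective
map `v : Fin (m+1) → Fin n` whose consecutive values are edges. -/
noncomputable def PP {n : ℕ} (E : Fin n → Fin n → Prop) (S : Finset (Fin n)) (i j : Fin n) :
    Kn n :=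
  ∑ m ∈ Finset.range (n + 1), ∑ v : Fin (m + 1) → Fin n,
    if Function.Injective v ∧ v 0 = i ∧ v (Fin.last m) = j ∧
        (∀ r : Fin m, E (v r.castSucc) (v r.succ)) ∧
        (∀ r : Fin (m + 1), r ≠ 0 → r ≠ Fin.last m → v r ∈ S) then
      YY E (S \ Finset.image v Finset.univ)
    else 0

open Classical in
/-- The matrix `𝒴`, with diagonal entries `Y_{{i}}`, entries `−1` at edges of the graph,
and `0` elsewhere. -/
noncomputable def Ymat {n : ℕ} (E : Fin n → Fin n → Prop) : Matrix (Fin n) (Fin n) (Kn n) :=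
  Matrix.of fun i j => if i = j then YY E {i} else if E i j then -1 else 0

section Aux

variable {n : ℕ} {E : Fin n → Fin n → Prop} {U J : Finset (Fin n)} {x y a b : Fin n}

lemma reachIn_mono (h : U ⊆ J) (hab : ReachIn E U a b) : ReachIn E J a b :=
  Relation.ReflTransGen.mono (r := fun x y => E x y ∧ x ∈ U ∧ y ∈ U)
    (p := fun x y => E x y ∧ x ∈ J ∧ y ∈ J) (fun _ _ ⟨e, hx, hy⟩ => ⟨e, h hx, h hy⟩) _ _ hab

open Classical in
lemma mem_scc_self (hx : x ∈ U) : x ∈ scc E U x :=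
  Finset.mem_filter.2 ⟨hx, .refl, .refl⟩

open Classical in
lemma scc_subset : scc E U x ⊆ U := Finset.filter_subset _ _

open Classical in
lemma mem_scc_iff : y ∈ scc E U x ↔ y ∈ U ∧ ReachIn E U x y ∧ ReachIn E U y x :=
  Finset.mem_filter

lemma scc_eq_of_mem (hy : y ∈ scc E U x) : scc E U y = scc E U x := by
  rw [mem_scc_iff] at hy
  obtain ⟨hyU, hxy, hyx⟩ := hy
  ext z
  rw [mem_scc_iff, mem_scc_iff]
  exact ⟨fun ⟨hz, h1, h2⟩ => ⟨hz, hxy.trans h1, h2.trans hyx⟩,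
    fun ⟨hz, h1, h2⟩ => ⟨hz, hyx.trans h1, h2.trans hxy⟩⟩

/-- Any path between two mutually reachable points (rel. `x`) stays inside `scc E U x`. -/
lemma reachIn_scc (hbx : ReachIn E U b x) (hab : ReachIn E U a b) :
    ReachIn E U x a → ReachIn E (scc E U x) a b := by
  induction hab using Relation.ReflTransGen.head_induction_on with
  | refl => exact fun _ => .refl
  | head h hcb ih =>
    rename_i a' c
    intro hxa
    obtain ⟨he, haU, hcU⟩ := h
    have hxc : ReachIn E U x c := hxa.trans (.single ⟨he, haU, hcU⟩)
    have hcx : ReachIn E U c x := hcb.trans hbx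
    have hax : ReachIn E U a' x := (Relation.ReflTransGen.single ⟨he, haU, hcU⟩).trans hcx
    exact Relation.ReflTransGen.head
      ⟨he, mem_scc_iff.2 ⟨haU, hxa, hax⟩, mem_scc_iff.2 ⟨hcU, hxc, hcx⟩⟩ (ih hxc)

/-- The scc of `x` is unchanged when passing to a subset containing it. -/
lemma scc_restrict (hJ : scc E U x ⊆ J) (hJU : J ⊆ U) : scc E J x = scc E U x := by
  ext z
  rw [mem_scc_iff, mem_scc_iff]
  constructor
  · rintro ⟨hz, h1, h2⟩
    exact ⟨hJU hz, reachIn_mono hJU h1, reachIn_mono hJU h2⟩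
  · rintro ⟨hz, h1, h2⟩
    have hzJ : z ∈ J := hJ (mem_scc_iff.2 ⟨hz, h1, h2⟩)
    refine ⟨hzJ, ?_, ?_⟩
    · exact reachIn_mono hJ (reachIn_scc h2 h1 .refl)
    · exact reachIn_mono hJ (reachIn_scc Relation.ReflTransGen.refl h2 h1)

/-- Every vertex on an `f`-cycle (through a non-fixed point) lies in the scc of its start. -/
lemma cycle_mem_scc {f : Fin n → Fin n} {i : Fin n} {k : ℕ}
    (hne : f i ≠ i) (hk : 0 < k) (hmem : ∀ r < k, f^[r] i ∈ U)
    (hcyc : f^[k] i = i) (hedge : ∀ j ∈ U, f j = j ∨ E j (f j)) :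
    ∀ r < k, f^[r] i ∈ scc E U i := by
  have hiU : i ∈ U := by simpa using hmem 0 hk
  -- fixed points propagate
  have hprop : ∀ r, f (f^[r] i) = f^[r] i → ∀ s, r ≤ s → f^[s] i = f^[r] i := by
    intro r hfix s hs
    induction s, hs using Nat.le_induction with
    | base => rfl
    | succ s hs ih => rw [Function.iterate_succ_apply', ih, hfix]
  have hnofix : ∀ r < k, f (f^[r] i) ≠ f^[r] i := by
    intro r hr hfix
    have h1 : f^[k] i = f^[r] i := hprop r hfix k hr.le
    have h2 : f^[r] i = i := by rw [← h1, hcyc]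
    rw [h2] at hfix
    exact hne hfix
  have hmem' : ∀ r ≤ k, f^[r] i ∈ U := by
    intro r hr
    rcases lt_or_eq_of_le hr with h | h
    · exact hmem r h
    · rw [h, hcyc]; exact hiU
  have hstep : ∀ r < k, (fun p q => E p q ∧ p ∈ U ∧ q ∈ U) (f^[r] i) (f^[r+1] i) := by
    intro r hr
    refine ⟨?_, hmem r hr, hmem' (r+1) hr⟩
    rw [Function.iterate_succ_apply']
    rcases hedge (f^[r] i) (hmem r hr) with h | h
    · exact absurd h (hnofix r hr)
    · exact h
  have hchain : ∀ r s, r ≤ s → s ≤ k → ReachIn E U (f^[r] i) (f^[s] i) := by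
    intro r s hrs hsk
    induction s, hrs using Nat.le_induction with
    | base => exact .refl
    | succ s hs ih =>
      exact (ih (le_of_lt hsk)).tail (hstep s hsk)
  intro r hr
  refine mem_scc_iff.2 ⟨hmem r hr, ?_, ?_⟩
  · have := hchain 0 r (Nat.zero_le r) hr.le
    simpa using this
  · have := hchain r k hr.le le_rfl
    rwa [hcyc] at this

/-- Admissibility of a function `f` for the set `I`. -/
def Adm {n : ℕ} (E : Fin n → Fin n → Prop) (I : Finset (Fin n)) (f : Fin n → Fin n) : Prop :=
  (∀ i, i ∉ I → f i = i) ∧ (∀ i ∈ I, f i = i ∨ E i (f i)) ∧ IsAcyclicOn I f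

/-- The weight of a function on a set. -/
noncomputable def W {n : ℕ} (I : Finset (Fin n)) (f : Fin n → Fin n) :
    MvPolynomial (Fin n ⊕ Fin n) ℤ :=
  ∏ i ∈ I, if f i = i then X (Sum.inl i) else X (Sum.inr (f i))

open Classical in
lemma Ynum_eq_sum_filter {n : ℕ} (E : Fin n → Fin n → Prop) (I : Finset (Fin n)) :
    Ynum E I = ∑ f ∈ Finset.univ.filter (Adm E I), W I f := by
  classical
  rw [Ynum, Finset.sum_filter]
  refine Finset.sum_congr rfl fun f _ => ?_
  by_cases h : Adm E I f
  · rw [if_pos h]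
    obtain ⟨h1, h2, h3⟩ := h
    rw [if_pos ⟨h1, h2, h3⟩, W]
  · rw [if_neg h, if_neg (fun hc => h ⟨hc.1, hc.2.1, hc.2.2⟩)]

lemma Ynum_empty {n : ℕ} (E : Fin n → Fin n → Prop) : Ynum E ∅ = 1 := by
  classical
  rw [Ynum, Finset.sum_eq_single (id : Fin n → Fin n)]
  · rw [if_pos, Finset.prod_empty]
    exact ⟨fun i _ => rfl, fun i hi => absurd hi (Finset.notMem_empty i),
      fun i hi => absurd hi (Finset.notMem_empty i)⟩
  · intro f _ hf
    rw [if_neg]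
    rintro ⟨h1, -, -⟩
    exact hf (funext fun i => h1 i (Finset.notMem_empty i))
  · intro h
    exact absurd (Finset.mem_univ _) h

lemma YY_empty {n : ℕ} (E : Fin n → Fin n → Prop) : YY E ∅ = 1 := by
  rw [YY, Ynum_empty, map_one, Finset.prod_empty, div_one]

/-- If a cycle of `h` stays inside a set `S` where `h` agrees with `f`, and `f` is acyclic
on `T ⊇ S`, then the cycle is trivial. -/
lemma cycle_transfer {n : ℕ} {h f : Fin n → Fin n} {S T : Finset (Fin n)} {i : Fin n} {k : ℕ}
    (hST : S ⊆ T) (hi : i ∈ S) (hagree : ∀ x ∈ S, h x = f x)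
    (hk : 0 < k) (hmemS : ∀ r < k, h^[r] i ∈ S) (hcyc : h^[k] i = i)
    (hacyc : IsAcyclicOn T f) : h i = i := by
  have hiter : ∀ r ≤ k, h^[r] i = f^[r] i := by
    intro r hr
    induction r with
    | zero => rfl
    | succ r ih =>
      have hrk : r < k := hr
      rw [Function.iterate_succ_apply', Function.iterate_succ_apply', ← ih hrk.le,
        hagree _ (hmemS r hrk)]
  have hfcyc : f i = i := by
    refine hacyc i (hST hi) k hk (fun r hr => ?_) ?_
    · rw [← hiter r hr.le]; exact hST (hmemS r hr)
    · rw [← hiter k le_rfl]; exact hcyc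
  rw [hagree i hi, hfcyc]

/-- Restriction of an admissible function to a subset is admissible. -/
lemma adm_restrict {n : ℕ} {E : Fin n → Fin n → Prop} {I S : Finset (Fin n)} (hSI : S ⊆ I)
    {h f : Fin n → Fin n} (hf : ∀ x, f x = if x ∈ S then h x else x) (hh : Adm E I h) :
    Adm E S f := by
  classical
  obtain ⟨h1, h2, h3⟩ := hh
  have hagree : ∀ x ∈ S, f x = h x := fun x hx => by rw [hf, if_pos hx]
  refine ⟨fun i hi => by rw [hf, if_neg hi], fun i hi => by rw [hagree i hi]; exact h2 i (hSI hi), ?_⟩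
  intro i hi k hk hmem hcyc
  exact cycle_transfer hSI hi hagree hk hmem hcyc h3

/-- The complement of a union of sccs is a union of sccs. -/
lemma scc_sdiff {n : ℕ} {E : Fin n → Fin n → Prop} {I C : Finset (Fin n)}
    (hC : ∀ x ∈ C, scc E I x ⊆ C) : ∀ x ∈ I \ C, scc E I x ⊆ I \ C := by
  intro x hx z hz
  rw [Finset.mem_sdiff] at hx ⊢
  refine ⟨scc_subset hz, fun hzC => hx.2 ?_⟩
  have h1 : scc E I z = scc E I x := scc_eq_of_mem hz
  have h2 : x ∈ scc E I z := by rw [h1]; exact mem_scc_self hx.1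
  exact hC z hzC h2

/-- Key multiplicativity: if `C ⊆ I` is a union of sccs of `I`, then
`N_I = N_C · N_{I \ C}`. -/
lemma Ynum_mul_sdiff {n : ℕ} (E : Fin n → Fin n → Prop) {I C : Finset (Fin n)}
    (hCI : C ⊆ I) (hC : ∀ x ∈ C, scc E I x ⊆ C) :
    Ynum E I = Ynum E C * Ynum E (I \ C) := by
  classical
  have hD : ∀ x ∈ I \ C, scc E I x ⊆ I \ C := scc_sdiff hC
  rw [Ynum_eq_sum_filter, Ynum_eq_sum_filter, Ynum_eq_sum_filter, Finset.sum_mul_sum,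
    ← Finset.sum_product']
  refine Finset.sum_nbij'
    (fun h => (fun x => if x ∈ C then h x else x, fun x => if x ∈ I \ C then h x else x))
    (fun p x => if x ∈ C then p.1 x else p.2 x) ?_ ?_ ?_ ?_ ?_
  · -- splitting preserves admissibility
    intro h hh
    rw [Finset.mem_filter] at hh
    obtain ⟨-, hh⟩ := hh
    rw [Finset.mem_product, Finset.mem_filter, Finset.mem_filter]
    exact ⟨⟨Finset.mem_univ _, adm_restrict hCI (fun x => rfl) hh⟩,
      ⟨Finset.mem_univ _, adm_restrict Finset.sdiff_subset (fun x => rfl) hh⟩⟩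
  · -- combining preserves admissibility
    rintro ⟨f, g⟩ hp
    rw [Finset.mem_product, Finset.mem_filter, Finset.mem_filter] at hp
    obtain ⟨⟨-, hf⟩, -, hg⟩ := hp
    rw [Finset.mem_filter]
    refine ⟨Finset.mem_univ _, ?_⟩
    obtain ⟨hf1, hf2, hf3⟩ := hf
    obtain ⟨hg1, hg2, hg3⟩ := hg
    set h : Fin n → Fin n := fun x => if x ∈ C then f x else g x with hhdef
    have hfix : ∀ i, i ∉ I → h i = i := by
      intro i hi
      have hiC : i ∉ C := fun hc => hi (hCI hc)
      have hiD : i ∉ I \ C := fun hd => hi (Finset.mem_sdiff.1 hd).1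
      simp only [hhdef, if_neg hiC]
      exact hg1 i hiD
    have hedge : ∀ i ∈ I, h i = i ∨ E i (h i) := by
      intro i hi
      by_cases hiC : i ∈ C
      · simp only [hhdef, if_pos hiC]; exact hf2 i hiC
      · simp only [hhdef, if_neg hiC]
        exact hg2 i (Finset.mem_sdiff.2 ⟨hi, hiC⟩)
    refine ⟨hfix, hedge, ?_⟩
    intro i hi k hk hmem hcyc
    by_contra hne
    have hscc := cycle_mem_scc hne hk hmem hcyc hedge
    by_cases hiC : i ∈ C
    · have hsub : scc E I i ⊆ C := hC i hiC
      exact hne (cycle_transfer (le_refl C) hiC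
        (fun x hx => by simp only [hhdef, if_pos hx])
        hk (fun r hr => hsub (hscc r hr)) hcyc hf3)
    · have hiD : i ∈ I \ C := Finset.mem_sdiff.2 ⟨hi, hiC⟩
      have hsub : scc E I i ⊆ I \ C := hD i hiD
      exact hne (cycle_transfer (le_refl (I \ C)) hiD
        (fun x hx => by simp only [hhdef, if_neg (Finset.mem_sdiff.1 hx).2])
        hk (fun r hr => hsub (hscc r hr)) hcyc hg3)
  · -- left inverse
    intro h hh
    rw [Finset.mem_filter] at hh
    obtain ⟨-, h1, -, -⟩ := hh
    funext x
    by_cases hxC : x ∈ C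
    · simp only [if_pos hxC]
    · simp only [if_neg hxC]
      by_cases hxD : x ∈ I \ C
      · simp only [if_pos hxD]
      · simp only [if_neg hxD]
        have hxI : x ∉ I := fun hx => hxD (Finset.mem_sdiff.2 ⟨hx, hxC⟩)
        exact (h1 x hxI).symm
  · -- right inverse
    rintro ⟨f, g⟩ hp
    rw [Finset.mem_product, Finset.mem_filter, Finset.mem_filter] at hp
    obtain ⟨⟨-, hf1, -, -⟩, -, hg1, -, -⟩ := hp
    have e1 : (fun x => if x ∈ C then (if x ∈ C then f x else g x) else x) = f := by
      funext x
      by_cases hxC : x ∈ C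
      · simp only [if_pos hxC]
      · simp only [if_neg hxC]; exact (hf1 x hxC).symm
    have e2 : (fun x => if x ∈ I \ C then (if x ∈ C then f x else g x) else x) = g := by
      funext x
      by_cases hxD : x ∈ I \ C
      · simp only [if_pos hxD, if_neg (Finset.mem_sdiff.1 hxD).2]
      · simp only [if_neg hxD]; exact (hg1 x hxD).symm
    simp only [e1, e2]
  · -- weights multiply
    intro h hh
    have hsplit : W I h = W C h * W (I \ C) h := by
      rw [W, W, W, ← Finset.prod_sdiff hCI, mul_comm]
    rw [hsplit]
    congr 1
    · refine Finset.prod_congr rfl fun i hi => ?_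
      simp only [if_pos hi]
    · refine Finset.prod_congr rfl fun i hi => ?_
      simp only [if_pos hi]

lemma YY_mul_sdiff {n : ℕ} (E : Fin n → Fin n → Prop) {I C : Finset (Fin n)}
    (hCI : C ⊆ I) (hC : ∀ x ∈ C, scc E I x ⊆ C) :
    YY E I = YY E C * YY E (I \ C) := by
  rw [YY, YY, YY, Ynum_mul_sdiff E hCI hC, map_mul, div_mul_div_comm,
    ← Finset.prod_sdiff hCI, mul_comm (∏ i ∈ I \ C, XX i) _]

lemma main_aux {n : ℕ} (E : Fin n → Fin n → Prop) (I : Finset (Fin n)) :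
    YY E I = ∏ C ∈ I.image (fun x => scc E I x), YY E C := by
  classical
  induction I using Finset.strongInduction with
  | _ I ih =>
  rcases I.eq_empty_or_nonempty with rfl | hI
  · simp [YY_empty]
  obtain ⟨x, hx⟩ := hI
  set C := scc E I x with hCdef
  have hxC : x ∈ C := mem_scc_self hx
  have hCI : C ⊆ I := scc_subset
  have hCeq : ∀ y ∈ C, scc E I y = C := fun y hy => scc_eq_of_mem hy
  have hC : ∀ y ∈ C, scc E I y ⊆ C := fun y hy => (hCeq y hy).le
  set D := I \ C with hDdef
  have hD : ∀ y ∈ D, scc E I y ⊆ D := scc_sdiff hC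
  have hDeq : ∀ y ∈ D, scc E D y = scc E I y := fun y hy =>
    scc_restrict (hD y hy) Finset.sdiff_subset
  have himage : I.image (fun y => scc E I y) = insert C (D.image (fun y => scc E I y)) := by
    ext B
    simp only [Finset.mem_image, Finset.mem_insert]
    constructor
    · rintro ⟨y, hy, rfl⟩
      by_cases hyC : y ∈ C
      · left; exact hCeq y hyC
      · right; exact ⟨y, Finset.mem_sdiff.2 ⟨hy, hyC⟩, rfl⟩
    · rintro (rfl | ⟨y, hy, rfl⟩)
      · exact ⟨x, hx, rfl⟩
      · exact ⟨y, (Finset.mem_sdiff.1 hy).1, rfl⟩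
  have hCnot : C ∉ D.image (fun y => scc E I y) := by
    rw [Finset.mem_image]
    rintro ⟨y, hy, hEq⟩
    have hyC : y ∈ C := by rw [← hEq]; exact mem_scc_self (Finset.mem_sdiff.1 hy).1
    exact (Finset.mem_sdiff.1 hy).2 hyC
  have hDlt : D ⊂ I := Finset.sdiff_ssubset hCI ⟨x, hxC⟩
  have ihD := ih D hDlt
  rw [himage, Finset.prod_insert hCnot, YY_mul_sdiff E hCI hC, ihD]
  congr 1
  rw [Finset.image_congr (fun y hy => hDeq y hy)]

end Aux

/-- `Y_I` is the product of the `Y_{I_j}` over the strongly connected components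
`I_1,…,I_k` of `I`. -/
theorem stmt5 (n : ℕ) (E : Fin n → Fin n → Prop) (hE : ∀ i, ¬ E i i)
    (I : Finset (Fin n)) (hI : I.Nonempty) :
    YY E I = ∏ C ∈ I.image (fun x => scc E I x), YY E C :=
  main_aux E I
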